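/- For g ≥ 3, the maps T_1,…,T_{g−1}, S, R are well-defined automorphisms of the abelian group M(g) (i.e., the given formulas on γ_1,…,γ_g respect the relation 2(γ_1+⋯+γ_g) = 0 and define invertible endomorphisms), and there exists a group homomorphism ψ : G_C(g) → Aut(M(g)) with ψ(t_i) = T_i for i = 1,…,g−1, ψ(s) = S and ψ(ρ) = R; that is, the automorphisms T_i, S, R satisfy all the defining relations (C1)–(C8). -/

import Mathlib

open FreeGroup in
/-- Relations (C1)-(C8). The generator `Sum.inl i` is `t_{i+1}`, `Sum.inr false` is `s`,
and `Sum.inr true` is `ρ`. -/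
def relsC (g : ℕ) : Set (FreeGroup (Fin (g-1) ⊕ Bool)) :=
  -- (C1)
  {r | ∃ j k : Fin (g-1), ((j : ℕ) + 1 < k ∨ (k : ℕ) + 1 < j) ∧
        r = of (.inl k) * of (.inl j) * (of (.inl j) * of (.inl k))⁻¹} ∪
  -- (C2)
  {r | ∃ j k : Fin (g-1), (j : ℕ) + 1 = k ∧
        r = of (.inl j) * of (.inl k) * of (.inl j) *
            (of (.inl k) * of (.inl j) * of (.inl k))⁻¹} ∪
  -- (C3)
  {(List.ofFn (fun i : Fin (g-1) => of (Sum.inl i : Fin (g-1) ⊕ Bool))).prod ^ g *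
      (if Odd g then (of (Sum.inr true : Fin (g-1) ⊕ Bool))⁻¹ else 1)} ∪
  -- (C4)
  {of (Sum.inr false : Fin (g-1) ⊕ Bool) ^ 2} ∪
  -- (C5)  s t_j s = t_j⁻¹
  {r | ∃ j : Fin (g-1),
        r = of (.inr false) * of (.inl j) * of (.inr false) * of (.inl j)} ∪
  -- (C6)
  {of (Sum.inr true : Fin (g-1) ⊕ Bool) ^ 2} ∪
  -- (C7)  ρ t_j ρ = t_j
  {r | ∃ j : Fin (g-1),
        r = of (.inr true) * of (.inl j) * of (.inr true) * (of (.inl j))⁻¹} ∪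
  -- (C8)  ρ s ρ = s
  {of (Sum.inr true : Fin (g-1) ⊕ Bool) * of (.inr false) * of (.inr true) *
      (of (.inr false))⁻¹}

/-- `G_C(g)`, a presentation of the hyperelliptic mapping class group `M^h(N_g)`. -/
def GC (g : ℕ) : Type := PresentedGroup (relsC g)

instance (g : ℕ) : Group (GC g) := by unfold GC; infer_instance

/-- The generator `t_{i+1}` of `G_C(g)`. -/
def GC.t {g : ℕ} (i : Fin (g-1)) : GC g := PresentedGroup.of (rels := relsC g) (Sum.inl i)

/-- The generator `s` of `G_C(g)`. -/
def GC.s (g : ℕ) : GC g := PresentedGroup.of (rels := relsC g) (Sum.inr false)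

/-- The generator `ρ` of `G_C(g)`. -/
def GC.ρ (g : ℕ) : GC g := PresentedGroup.of (rels := relsC g) (Sum.inr true)

/-- `M(g) = ℤ^g / ⟨2(e₁ + ⋯ + e_g)⟩`, i.e. `H_1(N_g; ℤ)`. -/
def MN (g : ℕ) : Type :=
  (Fin g → ℤ) ⧸ AddSubgroup.zmultiples (fun _ => (2 : ℤ) : Fin g → ℤ)

instance (g : ℕ) : AddCommGroup (MN g) := by unfold MN; infer_instance

/-- `γ_i`, the class of `e_i` in `M(g)` (`i` is a 0-based index). -/
def γ {g : ℕ} (i : Fin g) : MN g :=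
  QuotientAddGroup.mk (Pi.single i 1)

/-- The inclusion `Fin (g-1) → Fin g`. -/
def idx {g : ℕ} (i : Fin (g-1)) : Fin g := ⟨i, by have := i.isLt; omega⟩

/-- The successor map `Fin (g-1) → Fin g`, `i ↦ i+1`. -/
def idx1 {g : ℕ} (i : Fin (g-1)) : Fin g := ⟨(i : ℕ) + 1, by have := i.isLt; omega⟩

/-- The formulas defining the automorphisms `T_i` on the generators `γ_j` of `M(g)`. -/
def IsT {g : ℕ} (T : Fin (g-1) → AddAut (MN g)) : Prop :=
  ∀ i : Fin (g-1),
    T i (γ (idx i)) = - γ (idx1 i) ∧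
    T i (γ (idx1 i)) = γ (idx i) + (2 : ℤ) • γ (idx1 i) ∧
    ∀ j : Fin g, j ≠ idx i → j ≠ idx1 i → T i (γ j) = γ j

/-- The formula defining the automorphism `S` on the generators `γ_j` of `M(g)`
(with 1-based index `j`, `S(γ_j) = (-1)^j (2γ_1 + ⋯ + 2γ_{j-1} + γ_j)`). -/
def IsS {g : ℕ} (S : AddAut (MN g)) : Prop :=
  ∀ j : Fin g,
    S (γ j) = (-1 : ℤ) ^ ((j : ℕ) + 1) • ((2 : ℤ) • (∑ k ∈ Finset.Iio j, γ k) + γ j)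

/-! ### Auxiliary constructions for `stmt8` -/

set_option linter.unnecessarySeqFocus false
set_option linter.unreachableTactic false
set_option linter.unusedTactic false
set_option maxHeartbeats 1000000

namespace Stmt8Aux

abbrev Vg (g : ℕ) := Fin g → ℤ

def vv (g : ℕ) : Vg g := fun _ => 2
def ee (g : ℕ) (j : ℕ) : Vg g := fun m => if (m : ℕ) = j then 1 else 0
def sg (g : ℕ) (j : ℕ) : Vg g := fun m => if (m : ℕ) < j then 1 else 0

variable {g : ℕ}

lemma idx_ne {i : Fin (g-1)} : idx i ≠ idx1 i := by simp [idx, idx1, Fin.ext_iff]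
lemma idx1_ne {i : Fin (g-1)} : idx1 i ≠ idx i := by simp [idx, idx1, Fin.ext_iff]

def Tend (i : Fin (g-1)) : AddMonoid.End (Vg g) :=
  AddMonoidHom.mk' (fun x k =>
    if k = idx i then x (idx1 i)
    else if k = idx1 i then -x (idx i) + 2 * x (idx1 i)
    else x k)
  (by intro x y; funext k
      by_cases h1 : k = idx i <;> by_cases h2 : k = idx1 i <;>
        simp [h1, h2, idx_ne, idx1_ne] <;> ring)

def Tinv (i : Fin (g-1)) : AddMonoid.End (Vg g) :=
  AddMonoidHom.mk' (fun x k =>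
    if k = idx i then 2 * x (idx i) - x (idx1 i)
    else if k = idx1 i then x (idx i)
    else x k)
  (by intro x y; funext k
      by_cases h1 : k = idx i <;> by_cases h2 : k = idx1 i <;>
        simp [h1, h2, idx_ne, idx1_ne] <;> ring)

lemma Tend_apply (i : Fin (g-1)) (x : Vg g) (k : Fin g) :
    Tend i x k =
      if k = idx i then x (idx1 i)
      else if k = idx1 i then -x (idx i) + 2 * x (idx1 i)
      else x k := rfl

lemma Tinv_apply (i : Fin (g-1)) (x : Vg g) (k : Fin g) :
    Tinv i x k =
      if k = idx i then 2 * x (idx i) - x (idx1 i)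
      else if k = idx1 i then x (idx i)
      else x k := rfl

lemma mulE (f h : AddMonoid.End (Vg g)) (x : Vg g) : (f * h) x = f (h x) := rfl
lemma oneE (x : Vg g) : (1 : AddMonoid.End (Vg g)) x = x := rfl

lemma Tend_Tinv (i : Fin (g-1)) : Tend i * Tinv i = 1 := by
  refine DFunLike.ext _ _ fun x => funext fun k => ?_
  rw [mulE, oneE]
  by_cases h1 : k = idx i <;> by_cases h2 : k = idx1 i <;>
    simp [Tend_apply, Tinv_apply, h1, h2, idx_ne, idx1_ne] <;> ring

lemma Tinv_Tend (i : Fin (g-1)) : Tinv i * Tend i = 1 := by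
  refine DFunLike.ext _ _ fun x => funext fun k => ?_
  rw [mulE, oneE]
  by_cases h1 : k = idx i <;> by_cases h2 : k = idx1 i <;>
    simp [Tend_apply, Tinv_apply, h1, h2, idx_ne, idx1_ne] <;> ring

lemma ee_apply (j : ℕ) (m : Fin g) : ee g j m = if (m : ℕ) = j then 1 else 0 := rfl
lemma sg_apply (j : ℕ) (m : Fin g) : sg g j m = if (m : ℕ) < j then 1 else 0 := rfl

lemma Tend_ee_self (i : Fin (g-1)) : Tend i (ee g (i : ℕ)) = -ee g ((i : ℕ)+1) := by
  funext k
  by_cases h1 : k = idx i <;> by_cases h2 : k = idx1 i <;>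
    simp [Tend_apply, ee_apply, h1, h2, idx, idx1, Fin.ext_iff] at * <;> omega

lemma Tend_ee_succ (i : Fin (g-1)) :
    Tend i (ee g ((i : ℕ)+1)) = ee g (i : ℕ) + (2:ℤ) • ee g ((i : ℕ)+1) := by
  funext k
  by_cases h1 : k = idx i <;> by_cases h2 : k = idx1 i <;>
    simp [Tend_apply, ee_apply, h1, h2, idx, idx1, Fin.ext_iff] at * <;> omega

lemma Tend_ee_other (i : Fin (g-1)) (j : ℕ) (hj1 : j ≠ (i : ℕ)) (hj2 : j ≠ (i : ℕ)+1) :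
    Tend i (ee g j) = ee g j := by
  funext k
  by_cases h1 : k = idx i <;> by_cases h2 : k = idx1 i <;>
    simp [Tend_apply, ee_apply, h1, h2, idx, idx1, Fin.ext_iff] at * <;> omega

lemma Tend_fix (i : Fin (g-1)) (x : Vg g) (h : x (idx i) = x (idx1 i)) :
    Tend i x = x := by
  funext k
  rw [Tend_apply]
  split_ifs with h1 h2
  · rw [h1]; exact h.symm
  · rw [h2, ← h]; ring
  · rfl

lemma Tend_sg (i : Fin (g-1)) (j : ℕ) (hj : j ≠ (i : ℕ)+1) :
    Tend i (sg g j) = sg g j := by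
  apply Tend_fix
  simp only [sg_apply, idx, idx1]
  split_ifs <;> omega

lemma Tend_sg_succ (i : Fin (g-1)) :
    Tend i (sg g ((i : ℕ)+1)) = sg g ((i : ℕ)+1) - ee g (i : ℕ) - ee g ((i : ℕ)+1) := by
  funext k
  by_cases h1 : k = idx i <;> by_cases h2 : k = idx1 i <;>
    simp [Tend_apply, sg_apply, ee_apply, h1, h2, idx, idx1, Fin.ext_iff] at * <;>
    split_ifs <;> omega

lemma Tend_vv (i : Fin (g-1)) : Tend i (vv g) = vv g := Tend_fix i _ rfl

lemma Tinv_vv (i : Fin (g-1)) : Tinv i (vv g) = vv g := by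
  funext k
  rw [Tinv_apply]
  split_ifs <;> simp [vv]

def Send (g : ℕ) : AddMonoid.End (Vg g) :=
  AddMonoidHom.mk' (fun x m =>
    (-1)^((m:ℕ)+1) * x m + 2 * ∑ k ∈ Finset.Ioi m, (-1)^((k:ℕ)+1) * x k)
  (by intro x y; funext m
      simp [mul_add, Finset.sum_add_distrib]; ring)

lemma Send_apply (x : Vg g) (m : Fin g) :
    Send g x m = (-1)^((m:ℕ)+1) * x m + 2 * ∑ k ∈ Finset.Ioi m, (-1)^((k:ℕ)+1) * x k := rfl

lemma Send_ee (j : ℕ) (hj : j < g) :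
    Send g (ee g j) = (-1:ℤ)^(j+1) • (ee g j + (2:ℤ) • sg g j) := by
  funext m
  have hsum : ∑ k ∈ Finset.Ioi m, (-1:ℤ)^((k:ℕ)+1) * ee g j k
      = if (m:ℕ) < j then (-1:ℤ)^(j+1) else 0 := by
    by_cases hmj : (m:ℕ) < j
    · rw [if_pos hmj]
      rw [Finset.sum_eq_single_of_mem (⟨j, hj⟩ : Fin g)
        (by simpa [Finset.mem_Ioi, Fin.lt_iff_val_lt_val] using hmj)]
      · simp [ee]
      · intro b _ hb
        simp only [ee]
        rw [if_neg (by simpa [Fin.ext_iff] using hb), mul_zero]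
    · rw [if_neg hmj]
      apply Finset.sum_eq_zero
      intro k hk
      simp only [Finset.mem_Ioi, Fin.lt_iff_val_lt_val] at hk
      simp only [ee]
      rw [if_neg (by omega), mul_zero]
  rw [Send_apply, hsum]
  simp only [ee, sg, Pi.smul_apply, Pi.add_apply, smul_eq_mul]
  rcases lt_trichotomy ((m:ℕ)) j with h|h|h
  · simp only [if_pos h, if_neg (show ¬(m:ℕ) = j by omega)]; ring
  · simp only [h, if_pos rfl, lt_irrefl, if_neg (lt_irrefl j)]; norm_num
  · simp only [if_neg (show ¬(m:ℕ) < j by omega), if_neg (show ¬(m:ℕ) = j by omega)]; ring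

lemma sg_zero : sg g 0 = 0 := by funext m; simp [sg]

lemma sg_succ (j : ℕ) : sg g (j+1) = sg g j + ee g j := by
  funext m
  simp only [sg, ee, Pi.add_apply]
  split_ifs <;> omega

lemma Send_sg (j : ℕ) (hj : j ≤ g) : Send g (sg g j) = (-1:ℤ)^j • sg g j := by
  induction j with
  | zero => simp [sg_zero]
  | succ n ih =>
    rw [sg_succ, map_add, ih (by omega), Send_ee n (by omega)]
    match_scalars <;> ring

lemma vv_eq : vv g = (2:ℤ) • sg g g := by
  funext m
  simp [vv, sg, m.isLt]

lemma Send_vv : Send g (vv g) = (-1:ℤ)^g • vv g := by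
  rw [vv_eq, map_zsmul, Send_sg g le_rfl]
  rw [smul_comm]

lemma single_eq_ee (j : Fin g) : (Pi.single j 1 : Vg g) = ee g (j : ℕ) := by
  funext m
  simp [Pi.single_apply, ee, Fin.ext_iff]

lemma end_ext {f h : AddMonoid.End (Vg g)}
    (H : ∀ j : Fin g, f (ee g (j : ℕ)) = h (ee g (j : ℕ))) : f = h := by
  have key : ∀ j : Fin g, f (Pi.single j 1) = h (Pi.single j 1) := by
    intro j; rw [single_eq_ee]; exact H j
  apply AddMonoidHom.functions_ext
  intro i x
  have hx : (Pi.single i x : Vg g) = x • Pi.single i 1 := by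
    funext m
    by_cases hm : m = i <;> simp [Pi.single_apply, hm]
  rw [hx]
  exact (map_zsmul f x _).trans ((congrArg (x • ·) (key i)).trans (map_zsmul h x _).symm)

lemma Send_Send : Send g * Send g = 1 := by
  apply end_ext
  intro j
  have hj := j.isLt
  rw [mulE, oneE]
  rw [Send_ee _ hj, map_zsmul, map_add, map_zsmul, Send_ee _ hj, Send_sg _ (by omega)]
  match_scalars <;> ring_nf <;> simp [pow_mul] <;>
    rcases Int.even_or_odd ((j:ℕ) : ℤ) with he | ho
  · exact Or.inl (Even.neg_one_pow (by exact_mod_cast he))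
  · exact Or.inr (Odd.neg_one_pow (by exact_mod_cast ho))

lemma Send_Send_apply (x : Vg g) : Send g (Send g x) = x := by
  have := DFunLike.congr_fun (Send_Send (g := g)) x
  rwa [mulE, oneE] at this

lemma TT_comm (j k : Fin (g-1)) (h : (j:ℕ)+1 < k ∨ (k:ℕ)+1 < j) :
    Tend k * Tend j = Tend j * Tend k := by
  have n1 : (idx j : Fin g) ≠ idx k := by simp [idx, Fin.ext_iff]; omega
  have n2 : (idx j : Fin g) ≠ idx1 k := by simp [idx, idx1, Fin.ext_iff]; omega
  have n3 : (idx1 j : Fin g) ≠ idx k := by simp [idx, idx1, Fin.ext_iff]; omega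
  have n4 : (idx1 j : Fin g) ≠ idx1 k := by simp [idx, idx1, Fin.ext_iff]; omega
  refine DFunLike.ext _ _ fun x => funext fun m => ?_
  simp only [mulE]
  by_cases c1 : m = idx j <;> by_cases c2 : m = idx1 j <;>
    by_cases c3 : m = idx k <;> by_cases c4 : m = idx1 k <;>
    simp_all [Tend_apply, idx_ne, idx1_ne, n1, n2, n3, n4, n1.symm, n2.symm, n3.symm, n4.symm]

lemma TT_braid (j k : Fin (g-1)) (hjk : (j:ℕ)+1 = k) :
    Tend j * Tend k * Tend j = Tend k * Tend j * Tend k := by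
  have e1 : (idx1 j : Fin g) = idx k := by simp [idx, idx1, Fin.ext_iff]; omega
  have n1 : (idx j : Fin g) ≠ idx k := by simp [idx, Fin.ext_iff]; omega
  have n2 : (idx j : Fin g) ≠ idx1 k := by simp [idx, idx1, Fin.ext_iff]; omega
  have n3 : (idx k : Fin g) ≠ idx1 k := idx_ne
  refine DFunLike.ext _ _ fun x => funext fun m => ?_
  simp only [mulE]
  by_cases c1 : m = idx j <;> by_cases c2 : m = idx k <;> by_cases c3 : m = idx1 k <;>
    simp_all [Tend_apply, e1, idx_ne, idx1_ne, n1, n2, n3, n1.symm, n2.symm, n3.symm] <;>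
    ring

lemma STST (i : Fin (g-1)) : Send g * Tend i * Send g * Tend i = 1 := by
  have hi : (i:ℕ) < g := by have := i.isLt; omega
  have hi1 : (i:ℕ)+1 < g := by have := i.isLt; omega
  apply end_ext
  intro j
  rw [mulE, mulE, mulE, oneE]
  by_cases hj1 : (j:ℕ) = (i:ℕ)
  · rw [hj1]
    have key : Tend i (Send g (Tend i (ee g (i:ℕ)))) = Send g (ee g (i:ℕ)) := by
      rw [Tend_ee_self, map_neg, Send_ee ((i:ℕ)+1) hi1, Send_ee (i:ℕ) hi]
      simp only [map_add, map_zsmul, map_neg]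
      rw [Tend_ee_succ, Tend_sg_succ, sg_succ]
      match_scalars <;> ring
    rw [key, Send_Send_apply]
  · by_cases hj2 : (j:ℕ) = (i:ℕ)+1
    · rw [hj2]
      have key : Tend i (Send g (Tend i (ee g ((i:ℕ)+1)))) = Send g (ee g ((i:ℕ)+1)) := by
        rw [Tend_ee_succ, map_add, map_zsmul, Send_ee (i:ℕ) hi, Send_ee ((i:ℕ)+1) hi1]
        simp only [map_add, map_zsmul, map_neg]
        rw [Tend_ee_self, Tend_sg i (i:ℕ) (by omega), Tend_ee_succ, Tend_sg_succ, sg_succ]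
        match_scalars <;> ring
      rw [key, Send_Send_apply]
    · rw [Tend_ee_other i (j:ℕ) hj1 hj2]
      have key : Tend i (Send g (ee g (j:ℕ))) = Send g (ee g (j:ℕ)) := by
        rw [Send_ee (j:ℕ) j.isLt]
        simp only [map_add, map_zsmul]
        rw [Tend_ee_other i (j:ℕ) hj1 hj2, Tend_sg i (j:ℕ) (by omega)]
      rw [key, Send_Send_apply]


lemma Tprod_eval (hg : 3 ≤ g) : ∀ (n : ℕ) (hn : n ≤ g-1) (f : Fin n → Fin (g-1))
    (hf : ∀ i : Fin n, (f i : ℕ) = g-1-n+(i:ℕ)) (x : Vg g),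
    (List.ofFn (fun i => Tend (f i))).prod x
    = fun m : Fin g => if (m:ℕ) < g-1-n then x m
        else if (m:ℕ) = g-1-n then x ⟨g-1, by omega⟩
        else -x ⟨(m:ℕ)-1, by have := m.isLt; omega⟩ + 2 * x ⟨g-1, by omega⟩ := by
  intro n
  induction n with
  | zero =>
    intro hn f hf x
    funext m
    have hm := m.isLt
    simp only [List.ofFn_zero, List.prod_nil, oneE]
    split_ifs with h1 h2
    · rfl
    · congr 1; apply Fin.ext; simp; omega
    · omega
  | succ n ih =>
    intro hn f hf x
    rw [List.ofFn_succ, List.prod_cons, mulE,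
      ih (by omega) (fun i => f i.succ) (fun i => by rw [hf]; simp [Fin.val_succ]; omega) x]
    funext m
    have hm := m.isLt
    have hf0 : (f 0 : ℕ) = g-1-(n+1) := by rw [hf]; simp
    rw [Tend_apply]
    have hidx : (idx (f 0) : Fin g).val = g-1-(n+1) := hf0
    have hidx1 : (idx1 (f 0) : Fin g).val = g-1-(n+1)+1 := by
      show (f 0 : ℕ) + 1 = _ ; omega
    simp only [Fin.ext_iff]
    split_ifs <;>
      first
      | rfl
      | (exfalso; omega)
      | (congr 1 <;>
          first
          | rfl
          | (apply Fin.ext; simp only [idx, idx1]; omega)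
          | (congr 1 <;>
              first
              | rfl
              | (apply Fin.ext; simp only [idx, idx1]; omega)
              | (congr 1 <;>
                  first
                  | rfl
                  | (apply Fin.ext; simp only [idx, idx1]; omega))))

/-! ### Quotient level -/

instance autGrp (g : ℕ) : Group (AddAut (MN g)) :=
  inferInstanceAs (Group (Multiplicative (AddAut (MN g))))

lemma mulA (f h : AddAut (MN g)) (y : MN g) : (f * h) y = f (h y) := rfl
lemma oneA (y : MN g) : (1 : AddAut (MN g)) y = y := rfl
lemma mulQ (f h : AddAut (MN g)) (y : (Fin g → ℤ) ⧸ AddSubgroup.zmultiples (fun _ => (2 : ℤ) : Fin g → ℤ)) :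
    (f * h) y = f (h y) := rfl
lemma oneQ (y : (Fin g → ℤ) ⧸ AddSubgroup.zmultiples (fun _ => (2 : ℤ) : Fin g → ℤ)) :
    (1 : AddAut (MN g)) y = y := rfl

def desc (f : AddMonoid.End (Vg g)) (hf : f (vv g) ∈ AddSubgroup.zmultiples (vv g)) :
    MN g →+ MN g :=
  QuotientAddGroup.map _ _ (f : Vg g →+ Vg g) (by
    rintro x hx
    rw [AddSubgroup.mem_zmultiples_iff] at hx
    obtain ⟨n, rfl⟩ := hx
    obtain ⟨m, hm⟩ := AddSubgroup.mem_zmultiples_iff.mp hf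
    refine AddSubgroup.mem_comap.mpr (AddSubgroup.mem_zmultiples_iff.mpr ⟨n * m, ?_⟩)
    show (n * m) • vv g = f (n • vv g)
    rw [map_zsmul, ← hm, smul_smul])

lemma desc_mk (f : AddMonoid.End (Vg g)) (hf) (x : Vg g) :
    desc f hf (QuotientAddGroup.mk x) = QuotientAddGroup.mk (f x) := rfl

def mkAut (f f' : AddMonoid.End (Vg g))
    (hf : f (vv g) ∈ AddSubgroup.zmultiples (vv g))
    (hf' : f' (vv g) ∈ AddSubgroup.zmultiples (vv g))
    (h1 : f * f' = 1) (h2 : f' * f = 1) : AddAut (MN g) where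
  toFun := desc f hf
  invFun := desc f' hf'
  left_inv := by
    intro y
    refine QuotientAddGroup.induction_on y fun x => ?_
    rw [desc_mk, desc_mk, show f' (f x) = x from by rw [← mulE, h2, oneE]]
  right_inv := by
    intro y
    refine QuotientAddGroup.induction_on y fun x => ?_
    rw [desc_mk, desc_mk, show f (f' x) = x from by rw [← mulE, h1, oneE]]
  map_add' := (desc f hf).map_add

lemma mkAut_apply (f f' : AddMonoid.End (Vg g)) (hf hf' h1 h2) (x : Vg g) :
    mkAut f f' hf hf' h1 h2 (QuotientAddGroup.mk x) = QuotientAddGroup.mk (f x) := rfl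

def RR (g : ℕ) : AddAut (MN g) :=
  { toFun := fun y => -y
    invFun := fun y => -y
    left_inv := neg_neg
    right_inv := neg_neg
    map_add' := fun a b => neg_add a b }

lemma RR_apply (y : MN g) : RR g y = -y := rfl
lemma RR_applyQ (y : (Fin g → ℤ) ⧸ AddSubgroup.zmultiples (fun _ => (2 : ℤ) : Fin g → ℤ)) :
    RR g y = -y := rfl

lemma hom_ext {N : Type*} [AddCommGroup N] {f h : MN g →+ N}
    (H : ∀ j : Fin g, f (γ j) = h (γ j)) : f = h := by
  have key : f.comp (QuotientAddGroup.mk' _) = h.comp (QuotientAddGroup.mk' _) := by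
    apply AddMonoidHom.functions_ext
    intro i x
    have hx : (Pi.single i x : Vg g) = x • Pi.single i 1 := by
      funext m
      by_cases hm : m = i <;> simp [Pi.single_apply, hm]
    simp only [AddMonoidHom.comp_apply, hx, map_zsmul]
    exact congrArg (x • ·) (H i)
  ext y
  refine QuotientAddGroup.induction_on y fun x => ?_
  exact DFunLike.congr_fun key x

lemma aut_ext {α β : AddAut (MN g)} (H : ∀ j : Fin g, α (γ j) = β (γ j)) : α = β := by
  have h2 := hom_ext (f := α.toAddMonoidHom) (h := β.toAddMonoidHom) H
  ext y
  exact DFunLike.congr_fun h2 y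

abbrev mkq (g : ℕ) : Vg g →+ MN g :=
  QuotientAddGroup.mk' (AddSubgroup.zmultiples (vv g))

lemma mkq_eq (x : Vg g) : mkq g x = QuotientAddGroup.mk x := rfl

lemma Tend_vv_mem (i : Fin (g-1)) : Tend i (vv g) ∈ AddSubgroup.zmultiples (vv g) := by
  rw [Tend_vv]; exact AddSubgroup.mem_zmultiples _

lemma Tinv_vv_mem (i : Fin (g-1)) : Tinv i (vv g) ∈ AddSubgroup.zmultiples (vv g) := by
  rw [Tinv_vv]; exact AddSubgroup.mem_zmultiples _

lemma Send_vv_mem : Send g (vv g) ∈ AddSubgroup.zmultiples (vv g) := by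
  rw [Send_vv]; exact AddSubgroup.mem_zmultiples_iff.mpr ⟨(-1)^g, rfl⟩

def TT (i : Fin (g-1)) : AddAut (MN g) :=
  mkAut (Tend i) (Tinv i) (Tend_vv_mem i) (Tinv_vv_mem i) (Tend_Tinv i) (Tinv_Tend i)

def SSa (g : ℕ) : AddAut (MN g) :=
  mkAut (Send g) (Send g) Send_vv_mem Send_vv_mem Send_Send Send_Send

lemma TT_apply (i : Fin (g-1)) (x : Vg g) :
    TT i (QuotientAddGroup.mk x) = QuotientAddGroup.mk (Tend i x) := rfl

lemma SSa_apply (x : Vg g) :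
    SSa g (QuotientAddGroup.mk x) = QuotientAddGroup.mk (Send g x) := rfl

lemma gamma_mk (j : Fin g) : γ j = QuotientAddGroup.mk (ee g (j : ℕ)) := by
  unfold γ
  rw [single_eq_ee]

/-! ### The statement-level properties of `T`, `S` -/

lemma TT_isT : IsT (TT (g := g)) := by
  intro i
  have h1 : (idx i : Fin g).val = (i : ℕ) := rfl
  have h2 : (idx1 i : Fin g).val = (i : ℕ) + 1 := rfl
  refine ⟨?_, ?_, ?_⟩
  · simp only [gamma_mk, h1, h2, TT_apply]
    rw [Tend_ee_self, ← mkq_eq, ← mkq_eq, map_neg]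
  · simp only [gamma_mk, h1, h2, TT_apply]
    rw [Tend_ee_succ, ← mkq_eq, ← mkq_eq, ← mkq_eq, map_add, map_zsmul]
  · intro j hj1 hj2
    have hj1' : (j:ℕ) ≠ (i:ℕ) := fun hh => hj1 (Fin.ext (hh.trans h1.symm))
    have hj2' : (j:ℕ) ≠ (i:ℕ)+1 := fun hh => hj2 (Fin.ext (hh.trans h2.symm))
    rw [gamma_mk, TT_apply, Tend_ee_other i (j:ℕ) hj1' hj2']

lemma mk_sg (j : Fin g) : (∑ k ∈ Finset.Iio j, γ k) = mkq g (sg g (j : ℕ)) := by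
  have hs : (sg g (j:ℕ)) = ∑ k ∈ Finset.Iio j, (Pi.single k 1 : Vg g) := by
    funext m
    rw [Finset.sum_apply]
    simp only [Pi.single_apply]
    rw [Finset.sum_ite_eq (Finset.Iio j) m (fun _ => (1:ℤ))]
    simp only [sg, Finset.mem_Iio, Fin.lt_def]
  rw [hs, map_sum]
  rfl

lemma SSa_isS : IsS (SSa (g := g)) := by
  intro j
  rw [gamma_mk, SSa_apply, Send_ee (j:ℕ) j.isLt, mk_sg, ← mkq_eq, ← mkq_eq]
  simp only [map_zsmul, map_add]
  module

/-! ### Transfer of the relations to `AddAut (MN g)` -/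

lemma TT_mul_comm (j k : Fin (g-1)) (h : Tend k * Tend j = Tend j * Tend k) :
    TT k * TT j = TT j * TT k := by
  refine AddEquiv.ext fun y => ?_
  refine QuotientAddGroup.induction_on y fun x => ?_
  rw [mulQ, mulQ, TT_apply, TT_apply, TT_apply, TT_apply, ← mulE, ← mulE, h]

lemma TT_mul_braid (j k : Fin (g-1)) (h : Tend j * Tend k * Tend j = Tend k * Tend j * Tend k) :
    TT j * TT k * TT j = TT k * TT j * TT k := by
  refine AddEquiv.ext fun y => ?_
  refine QuotientAddGroup.induction_on y fun x => ?_
  rw [mulQ, mulQ, mulA, mulA, TT_apply, TT_apply, TT_apply, TT_apply, TT_apply, TT_apply,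
    ← mulE, ← mulE, ← mulE, ← mulE, h]

lemma SSa_sq : SSa g * SSa g = 1 := by
  refine AddEquiv.ext fun y => ?_
  refine QuotientAddGroup.induction_on y fun x => ?_
  rw [mulQ, oneQ, SSa_apply, SSa_apply, Send_Send_apply]

lemma STST_aut (i : Fin (g-1)) : SSa g * TT i * SSa g * TT i = 1 := by
  refine AddEquiv.ext fun y => ?_
  refine QuotientAddGroup.induction_on y fun x => ?_
  rw [mulQ, mulA, mulA, oneQ, TT_apply, SSa_apply, TT_apply, SSa_apply]
  have h2 := DFunLike.congr_fun (STST i) x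
  rw [mulE, mulE, mulE, oneE] at h2
  rw [h2]

lemma RR_sq : RR g * RR g = 1 := by
  refine AddEquiv.ext fun y => ?_
  rw [mulA, oneA, RR_apply, RR_apply, neg_neg]

lemma RTR (i : Fin (g-1)) : RR g * TT i * RR g = TT i := by
  refine AddEquiv.ext fun y => ?_
  refine QuotientAddGroup.induction_on y fun x => ?_
  simp only [mulQ, mulA, RR_apply, RR_applyQ]
  rw [show (-(QuotientAddGroup.mk x : MN g)) = QuotientAddGroup.mk (-x)
      from (map_neg (mkq g) x).symm,
    TT_apply, map_neg,
    show (QuotientAddGroup.mk (-(Tend i x)) : MN g) = -QuotientAddGroup.mk (Tend i x)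
      from map_neg (mkq g) _,
    TT_apply]
  exact neg_neg _

lemma RSR : RR g * SSa g * RR g = SSa g := by
  refine AddEquiv.ext fun y => ?_
  refine QuotientAddGroup.induction_on y fun x => ?_
  simp only [mulQ, mulA, RR_apply, RR_applyQ]
  rw [show (-(QuotientAddGroup.mk x : MN g)) = QuotientAddGroup.mk (-x)
      from (map_neg (mkq g) x).symm,
    SSa_apply, map_neg,
    show (QuotientAddGroup.mk (-(Send g x)) : MN g) = -QuotientAddGroup.mk (Send g x)
      from map_neg (mkq g) _,
    SSa_apply]
  exact neg_neg _

/-! ### The relation (C3) -/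

lemma TTprod_apply : ∀ (n : ℕ) (f : Fin n → Fin (g-1)) (x : Vg g),
    ((List.ofFn fun i => TT (f i)).prod) (QuotientAddGroup.mk x)
      = QuotientAddGroup.mk (((List.ofFn fun i => Tend (f i)).prod) x) := by
  intro n
  induction n with
  | zero => intro f x; simp only [List.ofFn_zero, List.prod_nil, oneQ, oneE]; rfl
  | succ n ih =>
    intro f x
    rw [List.ofFn_succ, List.ofFn_succ, List.prod_cons, List.prod_cons, mulQ, mulE,
      ih (fun i => f i.succ) x, TT_apply]

def cyc (hg : 3 ≤ g) (j : Fin g) : Fin g := ⟨((j:ℕ)+1) % g, Nat.mod_lt _ (by omega)⟩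

def Abar (g : ℕ) : AddAut (MN g) := (List.ofFn (TT (g := g))).prod

lemma Abar_gamma (hg : 3 ≤ g) (j : Fin g) : Abar g (γ j) = -γ (cyc hg j) := by
  have hj := j.isLt
  rw [gamma_mk, Abar]
  rw [show (List.ofFn (TT (g := g))).prod = (List.ofFn fun i => TT ((fun a => a) i)).prod from rfl]
  rw [TTprod_apply (g-1) (fun a => a) (ee g (j:ℕ))]
  rw [Tprod_eval hg (g-1) le_rfl (fun a => a)
    (fun i => by show ((i : Fin (g-1)) : ℕ) = g-1-(g-1)+(i:ℕ); omega) (ee g (j:ℕ))]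
  by_cases hjg : (j:ℕ) < g-1
  · have hval : (fun m : Fin g => if (m:ℕ) < g-1-(g-1) then ee g (j:ℕ) m
        else if (m:ℕ) = g-1-(g-1) then ee g (j:ℕ) ⟨g-1, by omega⟩
        else -ee g (j:ℕ) ⟨(m:ℕ)-1, by have := m.isLt; omega⟩ + 2 * ee g (j:ℕ) ⟨g-1, by omega⟩)
        = -ee g ((j:ℕ)+1) := by
      funext m
      have hm := m.isLt
      simp only [ee, Pi.neg_apply]
      split_ifs <;> omega
    have hcyc : ((cyc hg j : Fin g) : ℕ) = (j:ℕ)+1 := by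
      show ((j:ℕ)+1) % g = (j:ℕ)+1
      exact Nat.mod_eq_of_lt (by omega)
    rw [hval, gamma_mk, hcyc, ← mkq_eq, ← mkq_eq, map_neg]
  · have hj1 : (j:ℕ) = g-1 := by omega
    have hval : (fun m : Fin g => if (m:ℕ) < g-1-(g-1) then ee g (j:ℕ) m
        else if (m:ℕ) = g-1-(g-1) then ee g (j:ℕ) ⟨g-1, by omega⟩
        else -ee g (j:ℕ) ⟨(m:ℕ)-1, by have := m.isLt; omega⟩ + 2 * ee g (j:ℕ) ⟨g-1, by omega⟩)
        = vv g - ee g 0 := by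
      funext m
      have hm := m.isLt
      simp only [ee, vv, Pi.sub_apply]
      split_ifs <;> omega
    have hcyc : ((cyc hg j : Fin g) : ℕ) = 0 := by
      show ((j:ℕ)+1) % g = 0
      rw [show (j:ℕ)+1 = g from by omega, Nat.mod_self]
    rw [hval, gamma_mk, hcyc, ← mkq_eq, ← mkq_eq, map_sub]
    have hvv : mkq g (vv g) = 0 := by
      rw [mkq_eq]
      refine (QuotientAddGroup.eq_zero_iff (vv g)).mpr ?_
      exact AddSubgroup.mem_zmultiples _
    rw [hvv, zero_sub]

lemma Abar_pow (hg : 3 ≤ g) (k : ℕ) (j : Fin g) :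
    ((Abar g)^k) (γ j) = (-1:ℤ)^k • γ ⟨((j:ℕ)+k) % g, Nat.mod_lt _ (by omega)⟩ := by
  induction k generalizing j with
  | zero =>
    have : (⟨((j:ℕ)+0) % g, Nat.mod_lt _ (by omega)⟩ : Fin g) = j := by
      apply Fin.ext
      show ((j:ℕ)+0) % g = (j:ℕ)
      rw [Nat.add_zero]
      exact Nat.mod_eq_of_lt j.isLt
    rw [pow_zero, oneA, this, pow_zero, one_smul]
  | succ k ih =>
    rw [pow_succ, mulA, Abar_gamma hg j, map_neg, ih (cyc hg j)]
    have hidx : (⟨(((cyc hg j : Fin g):ℕ)+k) % g, Nat.mod_lt _ (by omega)⟩ : Fin g)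
        = ⟨((j:ℕ)+(k+1)) % g, Nat.mod_lt _ (by omega)⟩ := by
      apply Fin.ext
      show (((j:ℕ)+1) % g + k) % g = ((j:ℕ)+(k+1)) % g
      rw [Nat.mod_add_mod]
      congr 1
      omega
    rw [hidx, ← neg_smul]
    congr 1
    rw [pow_succ]
    ring

lemma Abar_pow_g_even (hg : 3 ≤ g) (he : Even g) : (Abar g)^g = 1 := by
  apply aut_ext
  intro j
  rw [Abar_pow hg g j, oneA,
    show (⟨((j:ℕ)+g) % g, Nat.mod_lt _ (by omega)⟩ : Fin g) = j from
      Fin.ext ((Nat.add_mod_right _ _).trans (Nat.mod_eq_of_lt j.isLt)),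
    Even.neg_one_pow he, one_smul]

lemma Abar_pow_g_odd (hg : 3 ≤ g) (ho : Odd g) : (Abar g)^g = RR g := by
  apply aut_ext
  intro j
  rw [Abar_pow hg g j, RR_apply,
    show (⟨((j:ℕ)+g) % g, Nat.mod_lt _ (by omega)⟩ : Fin g) = j from
      Fin.ext ((Nat.add_mod_right _ _).trans (Nat.mod_eq_of_lt j.isLt)),
    Odd.neg_one_pow ho, neg_one_zsmul]

end Stmt8Aux

open Stmt8Aux

/-- The formulas for `T_i`, `S`, `R` define automorphisms of `M(g)` and there is a
homomorphism `ψ : G_C(g) → Aut(M(g))` with `ψ(t_i) = T_i`, `ψ(s) = S`, `ψ(ρ) = R`;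
i.e. `T_i`, `S`, `R` satisfy the relations (C1)-(C8). -/
theorem stmt8 (g : ℕ) (hg : 3 ≤ g) :
    ∃ (T : Fin (g-1) → AddAut (MN g)) (S R : AddAut (MN g)),
      IsT T ∧ IsS S ∧ (∀ x, R x = -x) ∧
      ∃ ψ : GC g →* Multiplicative (AddAut (MN g)),
        (∀ i : Fin (g-1), Multiplicative.toAdd (ψ (GC.t i)) = T i) ∧
          Multiplicative.toAdd (ψ (GC.s g)) = S ∧ Multiplicative.toAdd (ψ (GC.ρ g)) = R := by
  classical
  refine ⟨TT, SSa g, RR g, TT_isT, SSa_isS, fun x => rfl, ?_⟩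
  set F : (Fin (g-1) ⊕ Bool) → AddAut (MN g) :=
    Sum.elim TT (fun b => if b then RR g else SSa g) with hFdef
  have hFt : ∀ i : Fin (g-1), F (Sum.inl i) = TT i := fun i => rfl
  have hFs : F (Sum.inr false) = SSa g := rfl
  have hFr : F (Sum.inr true) = RR g := rfl
  have hF : ∀ r ∈ relsC g, FreeGroup.lift F r = 1 := by
    intro r hr
    simp only [relsC, Set.mem_union, Set.mem_setOf_eq, Set.mem_singleton_iff] at hr
    rcases hr with (((((((⟨j, k, hjk, rfl⟩ | ⟨j, k, hjk, rfl⟩) | rfl) | rfl) |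
      ⟨j, rfl⟩) | rfl) | ⟨j, rfl⟩) | rfl)
    · -- C1
      simp only [map_mul, map_inv, FreeGroup.lift_apply_of, hFt]
      rw [mul_inv_eq_one]
      exact TT_mul_comm j k (TT_comm j k hjk)
    · -- C2
      simp only [map_mul, map_inv, FreeGroup.lift_apply_of, hFt]
      rw [mul_inv_eq_one]
      exact TT_mul_braid j k (TT_braid j k hjk)
    · -- C3
      have hP : FreeGroup.lift F
          (List.ofFn (fun i : Fin (g-1) => FreeGroup.of (Sum.inl i : Fin (g-1) ⊕ Bool))).prod
          = Abar g := by
        rw [map_list_prod, List.map_ofFn]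
        refine congrArg List.prod (congrArg List.ofFn ?_)
        funext i
        show FreeGroup.lift F (FreeGroup.of (Sum.inl i)) = TT i
        rw [FreeGroup.lift_apply_of, hFt]
      rcases Nat.even_or_odd g with he | ho
      · rw [if_neg (Nat.not_odd_iff_even.mpr he), mul_one, map_pow, hP]
        exact Abar_pow_g_even hg he
      · rw [if_pos ho, map_mul, map_pow, hP, map_inv, FreeGroup.lift_apply_of, hFr,
          mul_inv_eq_one]
        exact Abar_pow_g_odd hg ho
    · -- C4
      simp only [map_pow, FreeGroup.lift_apply_of, hFs]
      rw [sq]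
      exact SSa_sq
    · -- C5
      simp only [map_mul, FreeGroup.lift_apply_of, hFs, hFt]
      exact STST_aut j
    · -- C6
      simp only [map_pow, FreeGroup.lift_apply_of, hFr]
      rw [sq]
      exact RR_sq
    · -- C7
      simp only [map_mul, map_inv, FreeGroup.lift_apply_of, hFr, hFt]
      rw [mul_inv_eq_one]
      exact RTR j
    · -- C8
      simp only [map_mul, map_inv, FreeGroup.lift_apply_of, hFr, hFs]
      rw [mul_inv_eq_one]
      exact RSR
  refine ⟨PresentedGroup.toGroup hF, ?_, ?_, ?_⟩
  · intro i
    exact PresentedGroup.toGroup.of hF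
  · exact PresentedGroup.toGroup.of hF
  · exact PresentedGroup.toGroup.of hF
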